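/- Let f, g : F_q^d → F_q be linear bipermutive local rules with coprime associated polynomials of degree n = d−1, and let M_{f,g} be their 2n×2n Sylvester matrix. If the dynamical system s ↦ M_{f,g}·s on F_q^{2n} contains a cycle of length q^{2n} − 1, then the minimal polynomial of M_{f,g} is primitive of degree 2n, and the system consists exactly of the fixed point 0 and a single cycle of length q^{2n} − 1. -/

import Mathlib

open Polynomial in
set_option maxHeartbeats 1000000 in
theorem aux18 (K : Type*) [Field K] [Fintype K] (N : ℕ) (hN2 : 2 ≤ N)
    (M : Matrix (Fin N) (Fin N) K) (s₀ : Fin N → K)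
    (hlb : IsLeast {k : ℕ | 0 < k ∧ (M ^ k).mulVec s₀ = s₀} (Fintype.card K ^ N - 1)) :
    Irreducible (minpoly K M) ∧
    orderOf (AdjoinRoot.root (minpoly K M)) = Fintype.card K ^ N - 1 ∧
    (minpoly K M).natDegree = N ∧
    M.mulVec 0 = 0 ∧
    (∀ s : Fin N → K, s ≠ 0 →
      IsLeast {k : ℕ | 0 < k ∧ (M ^ k).mulVec s = s} (Fintype.card K ^ N - 1)) ∧
    (∀ s t : Fin N → K, s ≠ 0 → t ≠ 0 → ∃ k : ℕ, (M ^ k).mulVec s = t) := by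
  classical
  haveI : NeZero N := ⟨by omega⟩
  set q := Fintype.card K with hq
  set Q := q ^ N with hQ
  set p := Q - 1 with hp
  have hq2 : 2 ≤ q := Fintype.one_lt_card
  have hqN : 4 ≤ Q := by
    calc (4:ℕ) = 2 ^ 2 := rfl
    _ ≤ q ^ 2 := Nat.pow_le_pow_left hq2 2
    _ ≤ Q := Nat.pow_le_pow_right (by omega) hN2
  have hppos : 0 < p := by omega
  obtain ⟨⟨-, hMp⟩, hmin⟩ := hlb
  have hmin : ∀ k : ℕ, 0 < k → (M ^ k).mulVec s₀ = s₀ → p ≤ k := fun k h1 h2 => hmin ⟨h1, h2⟩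
  have hadd : ∀ (a b : ℕ) (v : Fin N → K),
      (M ^ (a + b)).mulVec v = (M ^ a).mulVec ((M ^ b).mulVec v) := by
    intro a b v; rw [Matrix.mulVec_mulVec, ← pow_add]
  have hper : ∀ t : ℕ, (M ^ (p * t)).mulVec s₀ = s₀ := by
    intro t
    induction t with
    | zero => simp [Matrix.one_mulVec]
    | succ t ih => rw [Nat.mul_succ, hadd, hMp, ih]
  have hD : ∀ i j : ℕ, i < j → (M ^ i).mulVec s₀ = (M ^ j).mulVec s₀ → p ≤ j - i := by
    intro i j hij heq
    have hle : i ≤ p * i := Nat.le_mul_of_pos_left i hppos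
    have h1 : (M ^ (p * i)).mulVec s₀ = s₀ := hper i
    have h2 : (M ^ ((p * i - i) + j)).mulVec s₀ = s₀ := by
      rw [hadd, ← heq, ← hadd]
      have h3 : (p * i - i) + i = p * i := by omega
      rw [h3]; exact h1
    have h3 : (p * i - i) + j = (j - i) + (p * i) := by omega
    rw [h3, hadd, h1] at h2
    exact hmin _ (by omega) h2
  have horbne : ∀ k : ℕ, (M ^ k).mulVec s₀ ≠ 0 := by
    intro k h
    have h2 : (M ^ (1 + k)).mulVec s₀ = 0 := by rw [hadd, h, Matrix.mulVec_zero]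
    have heq : (M ^ k).mulVec s₀ = (M ^ (1 + k)).mulVec s₀ := by rw [h, h2]
    have := hD k (1 + k) (by omega) heq
    omega
  have hcardV : Fintype.card (Fin N → K) = Q := by
    rw [Fintype.card_fun, Fintype.card_fin]
  have hOcard : ((Finset.range p).image (fun k => (M ^ k).mulVec s₀)).card = p := by
    rw [Finset.card_image_of_injOn, Finset.card_range]
    intro i hi j hj hij
    simp only [Finset.coe_range, Set.mem_Iio] at hi hj
    by_contra hne
    rcases Nat.lt_or_ge i j with h | h
    · have := hD i j h hij; omega
    · have hlt : j < i := by omega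
      have := hD j i hlt hij.symm; omega
  have hOsub : ((Finset.range p).image (fun k => (M ^ k).mulVec s₀)) ⊆
      Finset.univ.erase 0 := by
    intro x hx
    simp only [Finset.mem_image] at hx
    obtain ⟨k, -, rfl⟩ := hx
    exact Finset.mem_erase.mpr ⟨horbne k, Finset.mem_univ _⟩
  have hecard : (Finset.univ.erase (0 : Fin N → K)).card = p := by
    rw [Finset.card_erase_of_mem (Finset.mem_univ _), Finset.card_univ, hcardV]
  have hOeq : ((Finset.range p).image (fun k => (M ^ k).mulVec s₀)) =
      Finset.univ.erase 0 :=
    Finset.eq_of_subset_of_card_le hOsub (by rw [hOcard, hecard])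
  have hcover : ∀ s : Fin N → K, s ≠ 0 → ∃ k, k < p ∧ (M ^ k).mulVec s₀ = s := by
    intro s hs
    have h1 : s ∈ ((Finset.range p).image (fun k => (M ^ k).mulVec s₀)) := by
      rw [hOeq]; exact Finset.mem_erase.mpr ⟨hs, Finset.mem_univ _⟩
    simpa only [Finset.mem_image, Finset.mem_range] using h1
  have hswap : ∀ (a b : ℕ) (v : Fin N → K),
      (M ^ a).mulVec ((M ^ b).mulVec v) = (M ^ b).mulVec ((M ^ a).mulVec v) := by
    intro a b v
    rw [Matrix.mulVec_mulVec, Matrix.mulVec_mulVec, ← pow_add, ← pow_add, Nat.add_comm]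
  have hleast5 : ∀ s : Fin N → K, s ≠ 0 →
      IsLeast {k : ℕ | 0 < k ∧ (M ^ k).mulVec s = s} p := by
    intro s hs
    obtain ⟨j, hj, rfl⟩ := hcover s hs
    constructor
    · refine ⟨hppos, ?_⟩
      rw [hswap, hMp]
    · rintro k ⟨hk, hks⟩
      have h1 : (M ^ (k + j)).mulVec s₀ = (M ^ j).mulVec s₀ := by rw [hadd]; exact hks
      have := hD j (k + j) (by omega) h1.symm
      omega
  have h6 : ∀ s t : Fin N → K, s ≠ 0 → t ≠ 0 → ∃ k : ℕ, (M ^ k).mulVec s = t := by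
    intro s t hs ht
    obtain ⟨j, hj, rfl⟩ := hcover s hs
    obtain ⟨k, hk, rfl⟩ := hcover t ht
    refine ⟨k + (p - j), ?_⟩
    rw [Matrix.mulVec_mulVec, ← pow_add]
    have h1 : k + (p - j) + j = k + p := by omega
    rw [h1, hadd, hMp]
  have hMp1 : M ^ p = 1 := by
    have hact : ∀ v : Fin N → K, (M ^ p).mulVec v = v := by
      intro v
      by_cases hv : v = 0
      · simp [hv, Matrix.mulVec_zero]
      · exact ((hleast5 v hv).1).2
    apply Matrix.toLin'.injective
    apply LinearMap.ext
    intro v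
    simp only [Matrix.toLin'_apply, hact v, Matrix.one_mulVec]
  have hordM : orderOf M = p := by
    rw [orderOf_eq_iff hppos]
    refine ⟨hMp1, fun k hk hk0 hMk => ?_⟩
    have h1 : (M ^ k).mulVec s₀ = s₀ := by rw [hMk, Matrix.one_mulVec]
    have := hmin k hk0 h1
    omega
  -- minimal polynomial facts
  have hint : IsIntegral K M := IsIntegral.of_finite K M
  set μ := minpoly K M with hμ
  have hμ0 : μ ≠ 0 := minpoly.ne_zero hint
  have haev : (Polynomial.aeval M) μ = 0 := minpoly.aeval K M
  have hker : ∀ g ∈ (Ideal.span {μ} : Ideal K[X]), (Polynomial.aeval M).toRingHom g = 0 := by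
    intro g hg
    rcases Ideal.mem_span_singleton.mp hg with ⟨y, rfl⟩
    rw [map_mul]
    simp only [AlgHom.toRingHom_eq_coe, RingHom.coe_coe] at haev ⊢
    rw [haev, zero_mul]
  set φ : AdjoinRoot μ →+* Matrix (Fin N) (Fin N) K :=
    Ideal.Quotient.lift (Ideal.span {μ}) (Polynomial.aeval M).toRingHom hker with hφ
  have hφmk : ∀ g : K[X], φ (AdjoinRoot.mk μ g) = Polynomial.aeval M g := by
    intro g
    exact Ideal.Quotient.lift_mk _ _ _
  have hφinj : Function.Injective φ := by
    rw [injective_iff_map_eq_zero]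
    intro z hz
    obtain ⟨g, rfl⟩ := AdjoinRoot.mk_surjective z
    rw [AdjoinRoot.mk_eq_zero]
    apply minpoly.dvd K M
    rwa [hφmk] at hz
  have hφroot : φ.toMonoidHom (AdjoinRoot.root μ) = M := by
    show φ (AdjoinRoot.root μ) = M
    rw [AdjoinRoot.root, hφmk, Polynomial.aeval_X]
  have hordroot : orderOf (AdjoinRoot.root μ) = p := by
    have h := orderOf_injective φ.toMonoidHom hφinj (AdjoinRoot.root μ)
    rw [← h, hφroot, hordM]
  have hu : IsUnit M := IsUnit.of_pow_eq_one hMp1 hppos.ne'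
  have hrne : ∀ k : ℕ, (AdjoinRoot.root μ) ^ k ≠ 0 := by
    intro k h
    have h2 : φ (AdjoinRoot.root μ ^ k) = M ^ k := by
      rw [map_pow]; exact congrArg (· ^ k) hφroot
    rw [h, map_zero] at h2
    exact (hu.pow k).ne_zero h2.symm
  haveI : Nontrivial (AdjoinRoot μ) :=
    nontrivial_of_ne (AdjoinRoot.root μ) 0 (by simpa using hrne 1)
  have hrootp : AdjoinRoot.root μ ^ p = 1 := by rw [← hordroot]; exact pow_orderOf_eq_one _
  have hru : IsUnit (AdjoinRoot.root μ) := IsUnit.of_pow_eq_one hrootp hppos.ne'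
  have hkey : ∀ i j : ℕ, i ≤ j → j < p →
      AdjoinRoot.root μ ^ i = AdjoinRoot.root μ ^ j → i = j := by
    intro i j h hj hij
    have hone : AdjoinRoot.root μ ^ (j - i) = 1 := by
      refine (hru.pow i).mul_right_cancel ?_
      rw [← pow_add, one_mul, Nat.sub_add_cancel h]
      exact hij.symm
    have hdvd := orderOf_dvd_of_pow_eq_one hone
    rw [hordroot] at hdvd
    rcases Nat.eq_zero_or_pos (j - i) with h0 | h0
    · omega
    · have := Nat.le_of_dvd h0 hdvd; omega
  let pb := AdjoinRoot.powerBasis hμ0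
  haveI : Fintype (AdjoinRoot μ) := Module.fintypeOfFintype pb.basis
  have hcardA : Fintype.card (AdjoinRoot μ) = q ^ μ.natDegree := by
    rw [Module.card_fintype pb.basis, Fintype.card_fin, hq]
    rfl
  have hdegle : μ.natDegree ≤ N := by
    have hd := Matrix.minpoly_dvd_charpoly M
    have h1 := Polynomial.natDegree_le_of_dvd hd (Matrix.charpoly_monic M).ne_zero
    rwa [Matrix.charpoly_natDegree_eq_dim M, Fintype.card_fin] at h1
  have hRcard : ((Finset.range p).image (fun k => AdjoinRoot.root μ ^ k)).card = p := by
    rw [Finset.card_image_of_injOn, Finset.card_range]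
    intro i hi j hj hij
    simp only [Finset.coe_range, Set.mem_Iio] at hi hj
    rcases Nat.le_total i j with h | h
    · exact hkey i j h hj hij
    · exact (hkey j i h hi hij.symm).symm
  have hRsub : ((Finset.range p).image (fun k => AdjoinRoot.root μ ^ k)) ⊆
      Finset.univ.erase 0 := by
    intro x hx
    simp only [Finset.mem_image] at hx
    obtain ⟨k, -, rfl⟩ := hx
    exact Finset.mem_erase.mpr ⟨hrne k, Finset.mem_univ _⟩
  have hcardApos : 0 < Fintype.card (AdjoinRoot μ) := Fintype.card_pos
  have hcardge : Q ≤ Fintype.card (AdjoinRoot μ) := by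
    have h1 := Finset.card_le_card hRsub
    rw [hRcard, Finset.card_erase_of_mem (Finset.mem_univ _), Finset.card_univ] at h1
    omega
  have hdegeq : μ.natDegree = N := by
    have h1 : q ^ N ≤ q ^ μ.natDegree := by rw [← hcardA, ← hQ]; exact hcardge
    have h2 := (Nat.pow_le_pow_iff_right (by omega : 1 < q)).mp h1
    omega
  have hAcard : Fintype.card (AdjoinRoot μ) = Q := by rw [hcardA, hdegeq, hQ]
  have hReq : ((Finset.range p).image (fun k => AdjoinRoot.root μ ^ k)) =
      Finset.univ.erase 0 := by
    refine Finset.eq_of_subset_of_card_le hRsub ?_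
    rw [hRcard, Finset.card_erase_of_mem (Finset.mem_univ _), Finset.card_univ, hAcard]
  have hfield : IsField (AdjoinRoot μ) := by
    refine ⟨⟨AdjoinRoot.root μ, 0, by simpa using hrne 1⟩, mul_comm, ?_⟩
    intro z hz
    have hz' : z ∈ ((Finset.range p).image (fun k => AdjoinRoot.root μ ^ k)) := by
      rw [hReq]; exact Finset.mem_erase.mpr ⟨hz, Finset.mem_univ _⟩
    simp only [Finset.mem_image, Finset.mem_range] at hz'
    obtain ⟨k, -, rfl⟩ := hz'
    obtain ⟨u, hu'⟩ := hru.pow k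
    exact ⟨(u⁻¹ : (AdjoinRoot μ)ˣ), by rw [← hu', ← Units.val_mul, mul_inv_cancel, Units.val_one]⟩
  have hmax : (Ideal.span {μ} : Ideal K[X]).IsMaximal :=
    Ideal.Quotient.maximal_of_isField _ hfield
  have hprime : Prime μ := (Ideal.span_singleton_prime hμ0).mp hmax.isPrime
  exact ⟨hprime.irreducible, hordroot, hdegeq, Matrix.mulVec_zero M, hleast5, h6⟩

open Polynomial in
/-- Let `f, g` be linear bipermutive local rules of diameter
`d = m + 2` with coprime associated polynomials `P_f, P_g` of degree
`n = m + 1`, and let `M` be their `2n × 2n` Sylvester matrix. If the dynamical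
system `s ↦ M·s` on `F_q^{2n}` contains a cycle of length `q^{2n} - 1`, then
the minimal polynomial of `M` is primitive (irreducible with root of
multiplicative order `q^{2n} - 1`) of degree `2n`, and the system consists
exactly of the fixed point `0` and a single cycle of length `q^{2n} - 1`
through all nonzero states. -/
theorem stmt18 (K : Type*) [Field K] [Fintype K] (m : ℕ)
    (a b : Fin (m + 2) → K)
    (ha1 : a 0 ≠ 0) (had : a (Fin.last (m + 1)) ≠ 0)
    (hb1 : b 0 ≠ 0) (hbd : b (Fin.last (m + 1)) ≠ 0)
    (Pf Pg : K[X])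
    (hPf : Pf = ∑ i : Fin (m + 2), C (a i) * X ^ (i : ℕ))
    (hPg : Pg = ∑ i : Fin (m + 2), C (b i) * X ^ (i : ℕ))
    (hcop : IsCoprime Pf Pg)
    (M : Matrix (Fin ((m + 1) + (m + 1))) (Fin ((m + 1) + (m + 1))) K)
    (hM : ∀ i j : Fin ((m + 1) + (m + 1)),
      M i j =
        if i.val < m + 1 then
          (if i.val ≤ j.val then Pf.coeff (j.val - i.val) else 0)
        else
          (if i.val - (m + 1) ≤ j.val then Pg.coeff (j.val - (i.val - (m + 1))) else 0))
    (hcycle : ∃ s₀ : Fin ((m + 1) + (m + 1)) → K,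
      IsLeast {k : ℕ | 0 < k ∧ (M ^ k).mulVec s₀ = s₀}
        (Fintype.card K ^ ((m + 1) + (m + 1)) - 1)) :
    Irreducible (minpoly K M) ∧
    orderOf (AdjoinRoot.root (minpoly K M)) =
      Fintype.card K ^ ((m + 1) + (m + 1)) - 1 ∧
    (minpoly K M).natDegree = (m + 1) + (m + 1) ∧
    M.mulVec 0 = 0 ∧
    (∀ s : Fin ((m + 1) + (m + 1)) → K, s ≠ 0 →
      IsLeast {k : ℕ | 0 < k ∧ (M ^ k).mulVec s = s}
        (Fintype.card K ^ ((m + 1) + (m + 1)) - 1)) ∧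
    (∀ s t : Fin ((m + 1) + (m + 1)) → K, s ≠ 0 → t ≠ 0 →
      ∃ k : ℕ, (M ^ k).mulVec s = t) := by
  obtain ⟨s₀, hs₀⟩ := hcycle
  exact aux18 K ((m + 1) + (m + 1)) (by omega) M s₀ hs₀
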